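/- Let h : [0,1] → ℝ be a concave continuous function with h(0) = h(1) = 0 that is absolutely continuous with a.e. derivative h′ ∈ L²((0,1)) not a.e. equal to zero, and write ‖h′‖₂ = (∫₀¹ h′(p)² dp)^{1/2}. Let m ∈ ℝ, s ≥ 0, and let Q : (0,1) → ℝ be square-integrable with ∫₀¹ Q(p) dp = m and ∫₀¹ (Q(p) − m)² dp = s². Then ∫₀¹ Q(1−p)·h′(p) dp ≤ s·‖h′‖₂. -/

import Mathlib

open MeasureTheory

set_option maxHeartbeats 1000000 in
/-- Upper-bound half of Lemma 3.2: for any quantile function `Q` with mean `m`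
and variance `s²`, `∫₀¹ Q(1−p)·h′(p) dp ≤ s·‖h′‖₂`. -/
theorem stmt_10 (h h' : ℝ → ℝ)
    (hconc : ConcaveOn ℝ (Set.Icc 0 1) h)
    (hcont : ContinuousOn h (Set.Icc 0 1))
    (h0 : h 0 = 0) (h1 : h 1 = 0)
    (hAC : ∀ x ∈ Set.Icc (0 : ℝ) 1, h x = ∫ p in (0 : ℝ)..x, h' p)
    (hint : IntegrableOn h' (Set.Ioo 0 1))
    (hL2 : IntegrableOn (fun p => h' p ^ 2) (Set.Ioo 0 1))
    (hne : ¬ ∀ᵐ p ∂(volume.restrict (Set.Ioo (0 : ℝ) 1)), h' p = 0)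
    (m s : ℝ) (hs : 0 ≤ s) (Q : ℝ → ℝ)
    (hQint : IntegrableOn Q (Set.Ioo 0 1))
    (hQsq : IntegrableOn (fun p => (Q p - m) ^ 2) (Set.Ioo 0 1))
    (hmean : ∫ p in Set.Ioo (0 : ℝ) 1, Q p = m)
    (hvar : ∫ p in Set.Ioo (0 : ℝ) 1, (Q p - m) ^ 2 = s ^ 2) :
    ∫ p in Set.Ioo (0 : ℝ) 1, Q (1 - p) * h' p ≤
      s * Real.sqrt (∫ p in Set.Ioo (0 : ℝ) 1, h' p ^ 2) := by
  set μ := volume.restrict (Set.Ioo (0 : ℝ) 1) with hμ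
  set g : ℝ → ℝ := fun p => Q (1 - p) - m with hg
  -- reflection preserves integrability and integrals on (0,1)
  have hrefl : ∀ f : ℝ → ℝ, IntegrableOn f (Set.Ioo 0 1) →
      IntegrableOn (fun p => f (1 - p)) (Set.Ioo 0 1) := by
    intro f hf
    have h1' : IntervalIntegrable f volume 0 1 := by
      rw [intervalIntegrable_iff_integrableOn_Ioo_of_le (by norm_num)]
      exact hf
    have h2 := h1'.comp_sub_left 1
    simp only [sub_zero, sub_self] at h2
    have h3 : IntervalIntegrable (fun x => f (1 - x)) volume 0 1 := h2.symm
    rw [intervalIntegrable_iff_integrableOn_Ioo_of_le (by norm_num)] at h3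
    exact h3
  have hreflint : ∀ f : ℝ → ℝ,
      ∫ p in Set.Ioo (0 : ℝ) 1, f (1 - p) = ∫ p in Set.Ioo (0 : ℝ) 1, f p := by
    intro f
    have e1 : ∫ p in Set.Ioo (0 : ℝ) 1, f (1 - p) = ∫ p in (0 : ℝ)..1, f (1 - p) := by
      rw [intervalIntegral.integral_of_le (by norm_num), integral_Ioc_eq_integral_Ioo]
    have e2 : ∫ p in Set.Ioo (0 : ℝ) 1, f p = ∫ p in (0 : ℝ)..1, f p := by
      rw [intervalIntegral.integral_of_le (by norm_num), integral_Ioc_eq_integral_Ioo]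
    rw [e1, e2, intervalIntegral.integral_comp_sub_left f 1]
    norm_num
  -- g is square integrable with ∫ g² = s²
  have hgint : Integrable g μ := by
    have := hrefl Q hQint
    exact this.sub (integrable_const m)
  have hgsq : Integrable (fun p => g p ^ 2) μ := hrefl (fun p => (Q p - m) ^ 2) hQsq
  have hgsq_val : ∫ p, g p ^ 2 ∂μ = s ^ 2 := by
    have := hreflint (fun p => (Q p - m) ^ 2)
    rw [hμ]
    simpa [hg] using this.trans hvar
  -- ∫ h' = 0
  have hint0 : ∫ p, h' p ∂μ = 0 := by
    have := hAC 1 (by norm_num)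
    rw [h1] at this
    rw [hμ, ← integral_Ioc_eq_integral_Ioo,
      ← intervalIntegral.integral_of_le (by norm_num : (0:ℝ) ≤ 1)]
    exact this.symm
  -- Memℒp facts
  have hg2 : MemLp g 2 μ :=
    (memLp_two_iff_integrable_sq hgint.aestronglyMeasurable).2 hgsq
  have hh2 : MemLp h' 2 μ :=
    (memLp_two_iff_integrable_sq hint.aestronglyMeasurable).2 hL2
  -- product integrable
  have hprod : Integrable (fun p => g p * h' p) μ := by
    have := hh2.smul hg2 (r := 1)
    rw [memLp_one_iff_integrable] at this
    simpa [smul_eq_mul, Pi.mul_def] using this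
  -- Cauchy–Schwarz
  have hpq : Real.HolderConjugate 2 2 := ⟨by norm_num, by norm_num, by norm_num⟩
  have h2e : (ENNReal.ofReal 2) = 2 := by
    rw [show ((2:ℝ)) = ((2:ℕ):ℝ) by norm_num, ENNReal.ofReal_natCast]; rfl
  have hg2' : MemLp g (ENNReal.ofReal 2) μ := h2e ▸ hg2
  have hh2' : MemLp h' (ENNReal.ofReal 2) μ := h2e ▸ hh2
  have key := integral_mul_norm_le_Lp_mul_Lq hpq hg2' hh2'
  have eg : ∫ a, ‖g a‖ ^ (2 : ℝ) ∂μ = ∫ a, g a ^ 2 ∂μ := by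
    refine integral_congr_ae (Filter.Eventually.of_forall fun a => ?_)
    show ‖g a‖ ^ (2:ℝ) = g a ^ 2
    rw [show ((2:ℝ)) = ((2:ℕ):ℝ) by norm_num, Real.rpow_natCast]
    simp [sq_abs]
  have eh : ∫ a, ‖h' a‖ ^ (2 : ℝ) ∂μ = ∫ a, h' a ^ 2 ∂μ := by
    refine integral_congr_ae (Filter.Eventually.of_forall fun a => ?_)
    show ‖h' a‖ ^ (2:ℝ) = h' a ^ 2
    rw [show ((2:ℝ)) = ((2:ℕ):ℝ) by norm_num, Real.rpow_natCast]
    simp [sq_abs]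
  rw [eg, eh] at key
  have hgsqnn : 0 ≤ ∫ a, g a ^ 2 ∂μ :=
    integral_nonneg fun a => sq_nonneg _
  have hhsqnn : 0 ≤ ∫ a, h' a ^ 2 ∂μ :=
    integral_nonneg fun a => sq_nonneg _
  have hCS : ∫ p, g p * h' p ∂μ ≤
      Real.sqrt (∫ p, g p ^ 2 ∂μ) * Real.sqrt (∫ p, h' p ^ 2 ∂μ) := by
    calc ∫ p, g p * h' p ∂μ ≤ ‖∫ p, g p * h' p ∂μ‖ := le_abs_self _
      _ ≤ ∫ p, ‖g p * h' p‖ ∂μ := norm_integral_le_integral_norm _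
      _ = ∫ p, ‖g p‖ * ‖h' p‖ ∂μ := by
          refine integral_congr_ae (Filter.Eventually.of_forall fun p => ?_)
          exact norm_mul _ _
      _ ≤ (∫ a, g a ^ 2 ∂μ) ^ ((1:ℝ)/2) * (∫ a, h' a ^ 2 ∂μ) ^ ((1:ℝ)/2) := key
      _ = Real.sqrt (∫ p, g p ^ 2 ∂μ) * Real.sqrt (∫ p, h' p ^ 2 ∂μ) := by
          rw [Real.sqrt_eq_rpow, Real.sqrt_eq_rpow]
  -- assemble
  have hsplit : ∫ p, Q (1 - p) * h' p ∂μ = ∫ p, g p * h' p ∂μ + m * ∫ p, h' p ∂μ := by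
    rw [← integral_const_mul, ← integral_add hprod ((hint.const_mul m))]
    refine integral_congr_ae (Filter.Eventually.of_forall fun p => ?_)
    simp [hg]; ring
  calc ∫ p in Set.Ioo (0 : ℝ) 1, Q (1 - p) * h' p
      = ∫ p, g p * h' p ∂μ := by rw [← hμ] at *; rw [hsplit, hint0]; ring
    _ ≤ Real.sqrt (∫ p, g p ^ 2 ∂μ) * Real.sqrt (∫ p, h' p ^ 2 ∂μ) := hCS
    _ = s * Real.sqrt (∫ p in Set.Ioo (0 : ℝ) 1, h' p ^ 2) := by
        rw [hgsq_val, Real.sqrt_sq hs]
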